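/- Let (V, W, S, T, Q, P) be a Harnad datum with V ≠ 0, assume T is nilpotent (D = {0}), and assume the datum (V,W,T,Q,P) is stable. Suppose moreover W is decomposed as W = ⊕_k W_k with injections ι : W_k ↪ W_{k-1} realizing T in normal form, with block components Q_k : W_k → V and P_k : V → W_k of Q, P. Then: the Harnad datum is irreducible if and only if the only subspaces X ⊆ V with S(X) ⊆ X and (Σ_{j≥1} Q_j P_{j+k-1})(X) ⊆ X for all k ≥ 1 are X = 0 and X = V. -/

import Mathlib

section Setup

variable (V : Type*) [AddCommGroup V] [Module ℂ V]
variable (m : ℕ) (Wf : ℕ → Type*) [∀ n, AddCommGroup (Wf n)] [∀ n, Module ℂ (Wf n)]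

/-- The nilpotent endomorphism in normal form on `W = ⊕_{i≤m} W_i`:
`T(w₀, w₁, …) = (ι w₁, ι w₂, …, 0)`, where `ι : W_{i+1} ↪ W_i`. -/
noncomputable def Tbig (ι : ∀ n, Wf (n + 1) →ₗ[ℂ] Wf n) :
    (∀ i : Fin (m + 1), Wf i) →ₗ[ℂ] (∀ i : Fin (m + 1), Wf i) :=
  LinearMap.pi fun i =>
    if h : (i : ℕ) + 1 < m + 1 then
      (ι i).comp (LinearMap.proj (⟨(i : ℕ) + 1, h⟩ : Fin (m + 1)))
    else 0

/-- `Q : W → V` with block components `Q_i`. -/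
noncomputable def Qbig (Qc : ∀ i : Fin (m + 1), Wf i →ₗ[ℂ] V) :
    (∀ i : Fin (m + 1), Wf i) →ₗ[ℂ] V :=
  ∑ i : Fin (m + 1), (Qc i) ∘ₗ LinearMap.proj i

/-- `P : V → W` with block components `P_i`. -/
noncomputable def Pbig (Pc : ∀ i : Fin (m + 1), V →ₗ[ℂ] Wf i) :
    V →ₗ[ℂ] (∀ i : Fin (m + 1), Wf i) :=
  LinearMap.pi Pc

/-- The iterated inclusion `W_{j+a} ↪ W_j` obtained by composing the `ι`'s. -/
noncomputable def iotaChain (ι : ∀ n, Wf (n + 1) →ₗ[ℂ] Wf n) (j : ℕ) :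
    ∀ a : ℕ, Wf (j + a) →ₗ[ℂ] Wf j
  | 0 => LinearMap.id
  | (a + 1) => (iotaChain ι j a) ∘ₗ (ι (j + a))

/-- The Laurent coefficient `A_{a+1} = Σ_j Q_j P_{j+a}` (0-indexed) of the system
`A(z) = S + Q(z − T)^{-1} P`, where `W_{j+a}` is regarded inside `W_j` via `ι`. -/
noncomputable def Acoef (ι : ∀ n, Wf (n + 1) →ₗ[ℂ] Wf n)
    (Qc : ∀ i : Fin (m + 1), Wf i →ₗ[ℂ] V)
    (Pc : ∀ i : Fin (m + 1), V →ₗ[ℂ] Wf i) (a : ℕ) : Module.End ℂ V :=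
  ∑ j : Fin (m + 1),
    if h : (j : ℕ) + a < m + 1 then
      (Qc j) ∘ₗ (iotaChain Wf ι j a) ∘ₗ (Pc ⟨(j : ℕ) + a, h⟩)
    else 0

end Setup


section Helpers

variable (V : Type*) [AddCommGroup V] [Module ℂ V]
variable (m : ℕ) (Wf : ℕ → Type*) [∀ n, AddCommGroup (Wf n)] [∀ n, Module ℂ (Wf n)]
variable (ι : ∀ n, Wf (n + 1) →ₗ[ℂ] Wf n)

lemma Tbig_apply (w : ∀ i : Fin (m + 1), Wf i) (i : Fin (m + 1)) :
    Tbig m Wf ι w i =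
      if h : (i : ℕ) + 1 < m + 1 then ι i (w ⟨(i : ℕ) + 1, h⟩) else 0 := by
  simp only [Tbig, LinearMap.pi_apply]
  split_ifs with h
  · rfl
  · rfl

lemma Tbig_pow_apply (a : ℕ) (w : ∀ i : Fin (m + 1), Wf i) (i : Fin (m + 1)) :
    ((Tbig m Wf ι) ^ a) w i =
      if h : (i : ℕ) + a < m + 1 then iotaChain Wf ι i a (w ⟨(i : ℕ) + a, h⟩)
      else 0 := by
  induction a generalizing w with
  | zero =>
    have h : (i : ℕ) + 0 < m + 1 := by simpa using i.isLt
    rw [pow_zero, dif_pos h]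
    simp [iotaChain]
  | succ a ih =>
    rw [pow_succ]
    have hc : ((Tbig m Wf ι) ^ a * Tbig m Wf ι) w
        = ((Tbig m Wf ι) ^ a) (Tbig m Wf ι w) := rfl
    rw [hc, ih]
    by_cases h1 : (i : ℕ) + a < m + 1
    · rw [dif_pos h1, Tbig_apply]
      by_cases h2 : (i : ℕ) + a + 1 < m + 1
      · rw [dif_pos h2, dif_pos (by omega : (i : ℕ) + (a + 1) < m + 1)]
        rfl
      · rw [dif_neg h2, dif_neg (by omega : ¬ (i : ℕ) + (a + 1) < m + 1)]
        simp
    · rw [dif_neg h1, dif_neg (by omega : ¬ (i : ℕ) + (a + 1) < m + 1)]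

lemma Acoef_eq (Qc : ∀ i : Fin (m + 1), Wf i →ₗ[ℂ] V)
    (Pc : ∀ i : Fin (m + 1), V →ₗ[ℂ] Wf i) (a : ℕ) :
    Acoef V m Wf ι Qc Pc a
      = Qbig V m Wf Qc ∘ₗ ((Tbig m Wf ι) ^ a) ∘ₗ Pbig V m Wf Pc := by
  ext v
  simp only [Acoef, Qbig, Finset.sum_apply,
    LinearMap.comp_apply, LinearMap.sum_apply, LinearMap.proj_apply]
  refine Finset.sum_congr rfl fun j _ => ?_
  rw [Tbig_pow_apply]
  by_cases h : (j : ℕ) + a < m + 1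
  · rw [dif_pos h, dif_pos h]
    simp [Pbig, LinearMap.pi_apply]
  · rw [dif_neg h, dif_neg h]
    simp

end Helpers

/-- for a Harnad datum `(V,W,S,T,Q,P)` with `V ≠ 0`, `T` nilpotent in
normal form w.r.t. a decomposition `W = ⊕ W_i` with injections `ι : W_{i+1} ↪ W_i`,
and `(V,W,T,Q,P)` stable: the Harnad datum is irreducible if and only if the only
subspaces `X ⊆ V` invariant under `S` and under every Laurent coefficient
`A_k = Σ_{j≥1} Q_j P_{j+k-1}` (`k ≥ 1`) are `0` and `V`. -/
theorem stmt11
    (V : Type*) [AddCommGroup V] [Module ℂ V] [FiniteDimensional ℂ V] [Nontrivial V]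
    (m : ℕ) (Wf : ℕ → Type*) [∀ n, AddCommGroup (Wf n)] [∀ n, Module ℂ (Wf n)]
    [∀ n, FiniteDimensional ℂ (Wf n)]
    (ι : ∀ n, Wf (n + 1) →ₗ[ℂ] Wf n) (hι : ∀ n, Function.Injective (ι n))
    (S : Module.End ℂ V)
    (Qc : ∀ i : Fin (m + 1), Wf i →ₗ[ℂ] V) (Pc : ∀ i : Fin (m + 1), V →ₗ[ℂ] Wf i)
    (hstab : ∀ (X : Submodule ℂ V) (Y : Submodule ℂ (∀ i : Fin (m + 1), Wf i)),
      X.map (Pbig V m Wf Pc) ≤ Y → Y.map (Qbig V m Wf Qc) ≤ X →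
      Y.map (Tbig m Wf ι) ≤ Y →
      (X = ⊥ → Y = ⊥) ∧ (X = ⊤ → Y = ⊤)) :
    (∀ (X : Submodule ℂ V) (Y : Submodule ℂ (∀ i : Fin (m + 1), Wf i)),
        X.map S ≤ X → Y.map (Tbig m Wf ι) ≤ Y → Y.map (Qbig V m Wf Qc) ≤ X →
        X.map (Pbig V m Wf Pc) ≤ Y →
        (X = ⊥ ∧ Y = ⊥) ∨ (X = ⊤ ∧ Y = ⊤)) ↔
    (∀ X : Submodule ℂ V, X.map S ≤ X →
        (∀ a : ℕ, X.map (Acoef V m Wf ι Qc Pc a) ≤ X) → X = ⊥ ∨ X = ⊤) := by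
  constructor
  · -- irreducibility of datum → irreducibility of pair
    intro hirr X hSX hAX
    set T := Tbig m Wf ι with hT
    set Y : Submodule ℂ (∀ i : Fin (m + 1), Wf i) :=
      ⨆ a : ℕ, X.map ((T ^ a) ∘ₗ Pbig V m Wf Pc) with hY
    have hPX : X.map (Pbig V m Wf Pc) ≤ Y := by
      have h0 := le_iSup (fun a : ℕ => X.map ((T ^ a) ∘ₗ Pbig V m Wf Pc)) 0
      simp only [pow_zero, Module.End.one_eq_id, LinearMap.id_comp] at h0
      exact h0
    have hTY : Y.map T ≤ Y := by
      rw [hY, Submodule.map_iSup]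
      refine iSup_le fun a => ?_
      rw [← Submodule.map_comp]
      have hcomp : T ∘ₗ ((T ^ a) ∘ₗ Pbig V m Wf Pc)
          = (T ^ (a + 1)) ∘ₗ Pbig V m Wf Pc := by
        rw [← LinearMap.comp_assoc, ← Module.End.mul_eq_comp, ← pow_succ']
      rw [hcomp]
      exact le_iSup (fun a : ℕ => X.map ((T ^ a) ∘ₗ Pbig V m Wf Pc)) (a + 1)
    have hQY : Y.map (Qbig V m Wf Qc) ≤ X := by
      rw [hY, Submodule.map_iSup]
      refine iSup_le fun a => ?_
      rw [← Submodule.map_comp]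
      have := hAX a
      rw [Acoef_eq] at this
      exact this
    rcases hirr X Y hSX hTY hQY hPX with ⟨hX, _⟩ | ⟨hX, _⟩
    · exact Or.inl hX
    · exact Or.inr hX
  · -- irreducibility of pair → irreducibility of datum
    intro hpair X Y hSX hTY hQY hPX
    have hTpow : ∀ a : ℕ, Y.map ((Tbig m Wf ι) ^ a) ≤ Y := by
      intro a
      induction a with
      | zero => rw [pow_zero, Module.End.one_eq_id, Submodule.map_id]
      | succ a ih =>
        rw [pow_succ, Module.End.mul_eq_comp, Submodule.map_comp]
        exact le_trans (Submodule.map_mono hTY) ih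
    have hAX : ∀ a : ℕ, X.map (Acoef V m Wf ι Qc Pc a) ≤ X := by
      intro a
      rw [Acoef_eq, Submodule.map_comp, Submodule.map_comp]
      refine le_trans (Submodule.map_mono (le_trans (Submodule.map_mono hPX) ?_)) hQY
      exact hTpow a
    rcases hpair X hSX hAX with h | h
    · exact Or.inl ⟨h, (hstab X Y hPX hQY hTY).1 h⟩
    · exact Or.inr ⟨h, (hstab X Y hPX hQY hTY).2 h⟩
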